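/- Posterior null-probability comparison in the exchangeable Gaussian model (core of the optimal-ranking result under exchangeability): let m ≥ 2, let A be an m×m real matrix with constant diagonal A_{ii} = a and constant off-diagonal entries A_{ij} = b for i ≠ j, with b < a. Let π ∈ (0,1), μ < 0, and z ∈ ℝ^m with z_1 > z_2. For θ ∈ {0,1}^m define the unnormalized posterior weight g(θ) = π^{Σ_i θ_i} (1−π)^{m−Σ_i θ_i} · exp{(−1/2)(z−μθ)ᵀA(z−μθ)}. Then Σ over θ ∈ {0,1}^m with θ_1 = 0 of g(θ) is strictly greater than Σ over θ ∈ {0,1}^m with θ_2 = 0 of g(θ). Consequently, in the exchangeable Gaussian model the posterior null probability of hypothesis 1 strictly exceeds that of hypothesis 2 whenever z_1 > z_2 and μ < 0. -/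

import Mathlib

open Finset

lemma quad_form_eq (m : ℕ) (A : Matrix (Fin m) (Fin m) ℝ) (a b : ℝ)
    (hdiag : ∀ i, A i i = a) (hoff : ∀ i j, i ≠ j → A i j = b) (w : Fin m → ℝ) :
    dotProduct w (A.mulVec w)
      = (a - b) * ∑ i, (w i)^2 + b * (∑ i, w i)^2 := by
  have hrow : ∀ i, A.mulVec w i = (a - b) * w i + b * ∑ j, w j := by
    intro i
    have h1 : ∀ j, A i j * w j = (if j = i then (a - b) * w j else 0) + b * w j := by
      intro j
      by_cases hj : j = i
      · subst hj; simp [hdiag]; ring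
      · simp [hoff i j (fun h => hj h.symm), hj]
    simp only [Matrix.mulVec, dotProduct]
    rw [Finset.sum_congr rfl fun j _ => h1 j, Finset.sum_add_distrib,
      Finset.sum_ite_eq' Finset.univ i, ← Finset.mul_sum]
    simp
  simp only [dotProduct, hrow]
  rw [Finset.sum_congr rfl (fun i _ => by ring :
    ∀ i ∈ Finset.univ, w i * ((a - b) * w i + b * ∑ j, w j)
      = (a - b) * (w i)^2 + (b * ∑ j, w j) * w i)]
  rw [Finset.sum_add_distrib, ← Finset.mul_sum, ← Finset.mul_sum]
  ring

/-- The unnormalized posterior weight `g(θ)` of a configuration `θ ∈ {0,1}^m`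
(encoded as `θ : Fin m → Bool`): an i.i.d. Bernoulli(π) prior times the unnormalized
Gaussian likelihood `exp{(−1/2)(z−μθ)ᵀA(z−μθ)}` with precision matrix `A`. -/
noncomputable def postWeight (m : ℕ) (A : Matrix (Fin m) (Fin m) ℝ) (π μ : ℝ)
    (z : Fin m → ℝ) (θ : Fin m → Bool) : ℝ :=
  π ^ (Finset.univ.filter fun i => θ i = true).card *
    (1 - π) ^ (m - (Finset.univ.filter fun i => θ i = true).card) *
    Real.exp ((-(1 : ℝ) / 2) *
      dotProduct (z - μ • fun i => if θ i then (1 : ℝ) else 0)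
        (A.mulVec (z - μ • fun i => if θ i then (1 : ℝ) else 0)))

/-- **Posterior null-probability comparison in the exchangeable Gaussian model** (core of
the optimal-ranking result under exchangeability): with `b < a`, `π ∈ (0,1)`, `μ < 0`
and `z₁ > z₂`, the total unnormalized posterior weight of `{θ : θ₁ = 0}` strictly
exceeds that of `{θ : θ₂ = 0}`; i.e., the posterior null probability of hypothesis 1
strictly exceeds that of hypothesis 2. -/
theorem posterior_null_comparison (m : ℕ) (hm : 2 ≤ m)
    (A : Matrix (Fin m) (Fin m) ℝ) (a b : ℝ)
    (hdiag : ∀ i, A i i = a) (hoff : ∀ i j, i ≠ j → A i j = b) (hba : b < a)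
    (π : ℝ) (hπ : π ∈ Set.Ioo (0 : ℝ) 1) (μ : ℝ) (hμ : μ < 0)
    (z : Fin m → ℝ) (hz : z ⟨0, by omega⟩ > z ⟨1, by omega⟩) :
    ∑ θ ∈ Finset.univ.filter (fun θ : Fin m → Bool => θ ⟨0, by omega⟩ = false),
        postWeight m A π μ z θ
      > ∑ θ ∈ Finset.univ.filter (fun θ : Fin m → Bool => θ ⟨1, by omega⟩ = false),
          postWeight m A π μ z θ := by
  obtain ⟨hπ0, hπ1⟩ := hπ
  set e0 : Fin m := ⟨0, by omega⟩ with he0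
  set e1 : Fin m := ⟨1, by omega⟩ with he1
  have hne : e0 ≠ e1 := by simp [he0, he1, Fin.ext_iff]
  set σ := Equiv.swap e0 e1 with hσ
  -- card invariance under σ
  have hcard : ∀ θ : Fin m → Bool,
      (Finset.univ.filter fun i => θ (σ i) = true).card
        = (Finset.univ.filter fun i => θ i = true).card := by
    intro θ
    apply Finset.card_bij (fun i _ => σ i)
    · intro i hi; simp only [Finset.mem_filter, Finset.mem_univ, true_and] at hi ⊢; exact hi
    · intro i _ j _ h; exact σ.injective h
    · intro j hj
      simp only [Finset.mem_filter, Finset.mem_univ, true_and] at hj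
      exact ⟨σ j, by simp [Finset.mem_filter, Equiv.swap_apply_self, hσ, hj], by simp [hσ, Equiv.swap_apply_self]⟩
  -- the key strict inequality
  have hkey : ∀ θ : Fin m → Bool, θ e0 = false → θ e1 = true →
      postWeight m A π μ z (θ ∘ σ) < postWeight m A π μ z θ := by
    intro θ h0 h1
    unfold postWeight
    have hc := hcard θ
    simp only [Function.comp] at hc ⊢
    rw [hc]
    apply mul_lt_mul_of_pos_left _
      (mul_pos (pow_pos hπ0 _) (pow_pos (by linarith) _))
    apply Real.exp_lt_exp.mpr
    set w : (Fin m → Bool) → Fin m → ℝ :=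
      fun θ' => z - μ • fun i => if θ' i then (1 : ℝ) else 0 with hw
    have hwapp : ∀ θ' i, w θ' i = z i - μ * (if θ' i then (1:ℝ) else 0) := by
      intro θ' i; simp [hw]
    rw [quad_form_eq m A a b hdiag hoff, quad_form_eq m A a b hdiag hoff]
    -- equal linear sums
    have hS1 : ∑ i, w (fun i => θ (σ i)) i = ∑ i, w θ i := by
      simp only [hwapp]
      rw [Finset.sum_sub_distrib, Finset.sum_sub_distrib]
      congr 1
      rw [← Finset.mul_sum, ← Finset.mul_sum]
      congr 1
      exact Equiv.sum_comp σ (fun i => if θ i then (1:ℝ) else 0)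
    -- squared sums differ
    have hS2 : ∑ i, (w θ i)^2 < ∑ i, (w (fun i => θ (σ i)) i)^2 := by
      have hdiff : ∑ i, ((w (fun i => θ (σ i)) i)^2 - (w θ i)^2)
          = 2 * μ * (z e1 - z e0) := by
        have hzero : ∀ i ∈ Finset.univ, i ∉ ({e0, e1} : Finset (Fin m)) →
            (w (fun i => θ (σ i)) i)^2 - (w θ i)^2 = 0 := by
          intro i _ hi
          simp only [Finset.mem_insert, Finset.mem_singleton, not_or] at hi
          simp only [hwapp]
          rw [show σ i = i from Equiv.swap_apply_of_ne_of_ne hi.1 hi.2]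
          ring
        rw [← Finset.sum_subset (Finset.subset_univ ({e0, e1} : Finset (Fin m))) hzero,
          Finset.sum_pair hne]
        have h00 : σ e0 = e1 := Equiv.swap_apply_left e0 e1
        have h11 : σ e1 = e0 := Equiv.swap_apply_right e0 e1
        simp only [hwapp, h00, h11, h0, h1]
        norm_num
        ring
      have hpos : (0:ℝ) < 2 * μ * (z e1 - z e0) := by nlinarith [hz]
      have := Finset.sum_sub_distrib (s := (Finset.univ : Finset (Fin m)))
        (f := fun i => (w (fun i => θ (σ i)) i)^2) (g := fun i => (w θ i)^2)
      linarith [hdiff, this]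
      -- Σ f - Σ g = Σ (f-g) = pos
    rw [hS1]
    nlinarith [hS2]
  -- rewrite RHS sum via σ
  have hrw : ∑ θ ∈ Finset.univ.filter (fun θ : Fin m → Bool => θ e1 = false),
        postWeight m A π μ z θ
      = ∑ θ ∈ Finset.univ.filter (fun θ : Fin m → Bool => θ e0 = false),
        postWeight m A π μ z (θ ∘ σ) := by
    apply Finset.sum_nbij' (i := fun θ => θ ∘ σ) (j := fun θ => θ ∘ σ)
    · intro θ hθ
      simp only [Finset.mem_filter, Finset.mem_univ, true_and, Function.comp] at hθ ⊢
      rw [hσ, Equiv.swap_apply_left]; exact hθ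
    · intro θ hθ
      simp only [Finset.mem_filter, Finset.mem_univ, true_and, Function.comp] at hθ ⊢
      rw [hσ, Equiv.swap_apply_right]; exact hθ
    · intro θ _; funext i; simp [hσ, Equiv.swap_apply_self]
    · intro θ _; funext i; simp [hσ, Equiv.swap_apply_self]
    · intro θ _
      congr 1
      funext i
      simp [hσ, Equiv.swap_apply_self]
  rw [gt_iff_lt, hrw]
  apply Finset.sum_lt_sum
  · intro θ hθ
    simp only [Finset.mem_filter, Finset.mem_univ, true_and] at hθ
    rcases Bool.eq_false_or_eq_true (θ e1) with h1 | h1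
    · exact le_of_lt (hkey θ hθ h1)
    · have : θ ∘ σ = θ := by
        funext i
        rcases eq_or_ne i e0 with rfl | hi0
        · simp [Function.comp, hσ, Equiv.swap_apply_left, hθ, h1]
        rcases eq_or_ne i e1 with rfl | hi1
        · simp [Function.comp, hσ, Equiv.swap_apply_right, hθ, h1]
        · simp [Function.comp, hσ, Equiv.swap_apply_of_ne_of_ne hi0 hi1]
      rw [this]
  · refine ⟨fun i => decide (i = e1), ?_, ?_⟩
    · simp [Finset.mem_filter, hne]
    · exact hkey _ (by simp [hne]) (by simp)
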